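/- arXiv:2206.09383 — 5 statements merged into one kernel-verified Lean document; each statement's English description precedes it below -/
import Mathlib

section
/- Let a > 0 and x > 0, and set φ = arctan x and b = π²/(a(1+x²)). Then the generalised Poisson–Jacobi transformation ∑_{n=1}^∞ e^{-an²} cos(an²x) = (1/2)√(π/a) · cos(φ/2)/(1+x²)^{1/4} - 1/2 + √(π/a) · (1+x²)^{-1/4} ∑_{n=1}^∞ e^{-b n²} cos(b n² x - φ/2) holds, with both series absolutely convergent. -/
open Real Complex

lemma cpow_half_polar {r θ : ℝ} (hr : 0 < r) (hθ : θ ∈ Set.Ioc (-π) π) :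
    ((r : ℂ) * Complex.exp ((θ : ℂ) * Complex.I)) ^ (1/2 : ℂ)
      = (Real.sqrt r : ℂ) * Complex.exp (((θ/2 : ℝ) : ℂ) * Complex.I) := by
  have hw : ((r : ℂ) * Complex.exp ((θ : ℂ) * Complex.I)) ≠ 0 :=
    mul_ne_zero (by exact_mod_cast hr.ne') (Complex.exp_ne_zero _)
  rw [Complex.cpow_def_of_ne_zero hw]
  have habs : ‖(r : ℂ) * Complex.exp ((θ : ℂ) * Complex.I)‖ = r := by
    rw [norm_mul, Complex.norm_exp_ofReal_mul_I, Complex.norm_real, Real.norm_eq_abs, abs_of_pos hr, mul_one]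
  have harg : Complex.arg ((r : ℂ) * Complex.exp ((θ : ℂ) * Complex.I)) = θ := by
    rw [Complex.exp_mul_I]
    exact Complex.arg_mul_cos_add_sin_mul_I hr hθ
  rw [Complex.log, habs, harg, add_mul, Complex.exp_add]
  congr 1
  · rw [show (Real.log r : ℂ) * (1/2 : ℂ) = ((Real.log r * (1/2) : ℝ) : ℂ) by push_cast; ring,
      ← Complex.ofReal_exp, ← Real.rpow_def_of_pos hr, ← Real.sqrt_eq_rpow]
  · congr 1
    push_cast; ring

theorem stmt_5 (a x φ b : ℝ) (ha : 0 < a) (hx : 0 < x) (hφ : φ = Real.arctan x)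
    (hb : b = π ^ 2 / (a * (1 + x ^ 2))) :
    Summable (fun n : ℕ =>
      |Real.exp (-a * ((n : ℝ) + 1) ^ 2) * Real.cos (a * ((n : ℝ) + 1) ^ 2 * x)|) ∧
    Summable (fun n : ℕ =>
      |Real.exp (-b * ((n : ℝ) + 1) ^ 2) * Real.cos (b * ((n : ℝ) + 1) ^ 2 * x - φ / 2)|) ∧
    ∑' n : ℕ, Real.exp (-a * ((n : ℝ) + 1) ^ 2) * Real.cos (a * ((n : ℝ) + 1) ^ 2 * x) =
      (1 / 2) * Real.sqrt (π / a) * Real.cos (φ / 2) / (1 + x ^ 2) ^ ((1 : ℝ) / 4) - 1 / 2 +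
        Real.sqrt (π / a) * (1 + x ^ 2) ^ (-(1 : ℝ) / 4) *
          ∑' n : ℕ, Real.exp (-b * ((n : ℝ) + 1) ^ 2) *
            Real.cos (b * ((n : ℝ) + 1) ^ 2 * x - φ / 2) := by
  have hπ : (0:ℝ) < π := Real.pi_pos
  have h1x : (0:ℝ) < 1 + x ^ 2 := by positivity
  have hbpos : 0 < b := by rw [hb]; positivity
  -- summability helper
  have sumhelp : ∀ c : ℝ, 0 < c → ∀ g : ℕ → ℝ,
      Summable (fun n : ℕ => |Real.exp (-c * ((n : ℝ) + 1) ^ 2) * Real.cos (g n)|) := by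
    intro c hc g
    have hr1 : Real.exp (-c) < 1 := Real.exp_lt_one_iff.mpr (by linarith)
    refine Summable.of_nonneg_of_le (fun n => abs_nonneg _) (fun n => ?_)
      (((summable_geometric_of_lt_one (Real.exp_pos (-c)).le hr1).mul_left
        (Real.exp (-c))))
    have h1 : |Real.exp (-c * ((n : ℝ) + 1) ^ 2) * Real.cos (g n)|
        ≤ Real.exp (-c * ((n : ℝ) + 1) ^ 2) := by
      rw [abs_mul, Real.abs_exp]
      nlinarith [abs_cos_le_one (g n), Real.exp_pos (-c * ((n : ℝ) + 1) ^ 2),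
        abs_nonneg (Real.cos (g n))]
    refine h1.trans ?_
    rw [← Real.exp_nat_mul, ← Real.exp_add]
    apply Real.exp_le_exp.mpr
    nlinarith [mul_nonneg (mul_nonneg hc.le (Nat.cast_nonneg (α := ℝ) n)) (Nat.cast_nonneg (α := ℝ) n),
      mul_nonneg hc.le (Nat.cast_nonneg (α := ℝ) n)]
  refine ⟨sumhelp a ha _, sumhelp b hbpos _, ?_⟩
  -- the two half-plane points
  set τ0 : ℂ := (↑(a * x / π) + ↑(a / π) * Complex.I) with hτ0
  set τ1 : ℂ := (↑(-(b * x) / π) + ↑(b / π) * Complex.I) with hτ1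
  have hτ0im : 0 < τ0.im := by simp [hτ0]; positivity
  have hτ1im : 0 < τ1.im := by simp [hτ1]; positivity
  have hτ0ne : τ0 ≠ 0 := fun h => by simp [h] at hτ0im
  -- τ1 = (-τ0)⁻¹
  have hinv : (-τ0)⁻¹ = τ1 := by
    have hπc : (π:ℂ) ≠ 0 := by exact_mod_cast hπ.ne'
    have hac : (a:ℂ) ≠ 0 := by exact_mod_cast ha.ne'
    have key : a * b * (1 + x ^ 2) = π ^ 2 := by
      rw [hb]; field_simp
    apply inv_eq_of_mul_eq_one_right
    rw [hτ0, hτ1]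
    apply Complex.ext <;>
      simp [Complex.mul_re, Complex.mul_im] <;> field_simp <;> nlinarith [key]
  -- functional equation
  have hFE : jacobiTheta τ1 = (-Complex.I * τ0) ^ (1/2 : ℂ) * jacobiTheta τ0 := by
    have h := jacobiTheta_S_smul (UpperHalfPlane.mk τ0 hτ0im)
    rwa [UpperHalfPlane.modular_S_smul, UpperHalfPlane.coe_mk, UpperHalfPlane.coe_mk, hinv] at h
  have hφpos : 0 < φ := by
    have h := Real.arctan_strictMono hx
    rw [Real.arctan_zero] at h
    rw [hφ]; exact h
  have hφlt : φ < π/2 := hφ ▸ Real.arctan_lt_pi_div_two x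
  have hsq : (0:ℝ) < Real.sqrt (1 + x^2) := Real.sqrt_pos.mpr h1x
  set r : ℝ := (a/π) * Real.sqrt (1 + x^2) with hr
  have hrpos : 0 < r := by positivity
  have hcosφ : Real.cos φ = 1 / Real.sqrt (1 + x^2) := by rw [hφ]; exact Real.cos_arctan x
  have hsinφ : Real.sin φ = x / Real.sqrt (1 + x^2) := by rw [hφ]; exact Real.sin_arctan x
  have hpolar : -Complex.I * τ0 = (r:ℂ) * Complex.exp (((-φ : ℝ) : ℂ) * Complex.I) := by
    rw [Complex.exp_mul_I, hτ0]
    apply Complex.ext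
    · simp [Complex.mul_re, Complex.mul_im, Real.cos_neg, Real.sin_neg, hcosφ, hsinφ, hr,
        Complex.cos_ofReal_re, Complex.sin_ofReal_re]
      field_simp
    · simp [Complex.mul_re, Complex.mul_im, Real.cos_neg, Real.sin_neg, hcosφ, hsinφ, hr,
        Complex.cos_ofReal_re, Complex.sin_ofReal_re]
      field_simp
  have hc : (-Complex.I * τ0) ^ (1/2:ℂ)
      = ((Real.sqrt r : ℝ) : ℂ) * Complex.exp (((-φ/2 : ℝ) : ℂ) * Complex.I) := by
    rw [hpolar, cpow_half_polar hrpos ⟨by linarith, by linarith⟩]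
  set K : ℝ := Real.sqrt (π/a) * (1+x^2) ^ (-(1:ℝ)/4) with hK
  set E : ℂ := Complex.exp (((φ/2 : ℝ) : ℂ) * Complex.I) with hE
  have hsK : Real.sqrt r * K = 1 := by
    have h14 : Real.sqrt (Real.sqrt (1 + x^2)) = (1+x^2) ^ ((1:ℝ)/4) := by
      rw [Real.sqrt_eq_rpow, Real.sqrt_eq_rpow, ← Real.rpow_mul h1x.le]
      norm_num
    have hrs : Real.sqrt r = Real.sqrt (a/π) * (1+x^2) ^ ((1:ℝ)/4) := by
      rw [hr, Real.sqrt_mul (by positivity), h14]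
    rw [hrs, hK]
    have h1 : Real.sqrt (a/π) * Real.sqrt (π/a) = 1 := by
      rw [← Real.sqrt_mul (by positivity)]
      rw [show a/π * (π/a) = 1 by field_simp]
      exact Real.sqrt_one
    have h2 : (1+x^2) ^ ((1:ℝ)/4) * (1+x^2) ^ (-(1:ℝ)/4) = 1 := by
      rw [← Real.rpow_add h1x]; norm_num
    calc Real.sqrt (a/π) * (1+x^2) ^ ((1:ℝ)/4) * (Real.sqrt (π/a) * (1+x^2) ^ (-(1:ℝ)/4))
        = (Real.sqrt (a/π) * Real.sqrt (π/a)) * ((1+x^2) ^ ((1:ℝ)/4) * (1+x^2) ^ (-(1:ℝ)/4)) := by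
          ring
      _ = 1 := by rw [h1, h2, mul_one]
  have hcne : (-Complex.I * τ0) ^ (1/2:ℂ) ≠ 0 := by
    rw [hc]
    exact mul_ne_zero (by exact_mod_cast (Real.sqrt_pos.mpr hrpos).ne') (Complex.exp_ne_zero _)
  have hcinv : (((-Complex.I * τ0) ^ (1/2:ℂ)))⁻¹ = (K:ℂ) * E := by
    apply inv_eq_of_mul_eq_one_right
    rw [hc, hE, mul_mul_mul_comm, ← Complex.exp_add, ← Complex.ofReal_mul, hsK]
    rw [show ((-φ/2 : ℝ) : ℂ) * Complex.I + ((φ/2 : ℝ) : ℂ) * Complex.I = 0 by push_cast; ring]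
    simp
  -- term computations
  have termA : ∀ n : ℕ, (π:ℂ) * Complex.I * ((n:ℂ)+1)^2 * τ0
      = ((-a*((n:ℝ)+1)^2 : ℝ) : ℂ) + ((a*((n:ℝ)+1)^2*x : ℝ) : ℂ) * Complex.I := by
    intro n
    have hπc : (π:ℂ) ≠ 0 := by exact_mod_cast hπ.ne'
    rw [hτ0]
    push_cast
    field_simp
    ring_nf
    rw [Complex.I_sq]
    ring
  have termB : ∀ n : ℕ, (π:ℂ) * Complex.I * ((n:ℂ)+1)^2 * τ1
      = ((-b*((n:ℝ)+1)^2 : ℝ) : ℂ) + ((-(b*((n:ℝ)+1)^2*x) : ℝ) : ℂ) * Complex.I := by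
    intro n
    have hπc : (π:ℂ) ≠ 0 := by exact_mod_cast hπ.ne'
    rw [hτ1]
    push_cast
    field_simp
    ring_nf
    rw [Complex.I_sq]
    ring
  have hA : HasSum (fun n : ℕ => Real.exp (-a*((n:ℝ)+1)^2) * Real.cos (a*((n:ℝ)+1)^2*x))
      (((jacobiTheta τ0 - 1)/2).re) := by
    have h := (hasSum_nat_jacobiTheta hτ0im).mapL Complex.reCLM
    have h2 : ∀ n : ℕ, Complex.reCLM (Complex.exp ((π:ℂ) * Complex.I * ((n:ℂ)+1)^2 * τ0))
        = Real.exp (-a*((n:ℝ)+1)^2) * Real.cos (a*((n:ℝ)+1)^2*x) := by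
      intro n
      rw [Complex.reCLM_apply, termA n, Complex.exp_re]
      simp only [Complex.add_re, Complex.add_im, Complex.ofReal_re, Complex.ofReal_im,
        Complex.mul_re, Complex.mul_im, Complex.I_re, Complex.I_im, mul_zero, mul_one,
        zero_mul, sub_zero, zero_add, add_zero]
    simpa [h2] using h
  have hB : HasSum (fun n : ℕ => Real.exp (-b*((n:ℝ)+1)^2) * Real.cos (b*((n:ℝ)+1)^2*x - φ/2))
      ((E * ((jacobiTheta τ1 - 1)/2)).re) := by
    have h := (((hasSum_nat_jacobiTheta hτ1im).mul_left E)).mapL Complex.reCLM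
    have h2 : ∀ n : ℕ, Complex.reCLM (E * Complex.exp ((π:ℂ) * Complex.I * ((n:ℂ)+1)^2 * τ1))
        = Real.exp (-b*((n:ℝ)+1)^2) * Real.cos (b*((n:ℝ)+1)^2*x - φ/2) := by
      intro n
      rw [Complex.reCLM_apply, hE, ← Complex.exp_add, termB n]
      rw [show ((φ/2 : ℝ) : ℂ) * Complex.I + (((-b*((n:ℝ)+1)^2 : ℝ) : ℂ)
          + ((-(b*((n:ℝ)+1)^2*x) : ℝ) : ℂ) * Complex.I)
          = ((-b*((n:ℝ)+1)^2 : ℝ) : ℂ) + ((-(b*((n:ℝ)+1)^2*x) + φ/2 : ℝ) : ℂ) * Complex.I by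
        push_cast; ring]
      rw [Complex.exp_re]
      simp only [Complex.add_re, Complex.add_im, Complex.ofReal_re, Complex.ofReal_im,
        Complex.mul_re, Complex.mul_im, Complex.I_re, Complex.I_im, mul_zero, mul_one,
        zero_mul, sub_zero, zero_add, add_zero]
      rw [show b*((n:ℝ)+1)^2*x - φ/2 = -(-(b*((n:ℝ)+1)^2*x) + φ/2) by ring, Real.cos_neg]
    simpa [h2] using h
  -- final assembly
  have hθ0 : jacobiTheta τ0 = ((K:ℂ) * E) * jacobiTheta τ1 := by
    have h1 : ((K:ℂ) * E) * ((-Complex.I * τ0) ^ (1/2:ℂ)) = 1 := by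
      rw [← hcinv]; exact inv_mul_cancel₀ hcne
    calc jacobiTheta τ0 = (((K:ℂ) * E) * ((-Complex.I * τ0) ^ (1/2:ℂ))) * jacobiTheta τ0 := by
          rw [h1, one_mul]
      _ = ((K:ℂ) * E) * jacobiTheta τ1 := by rw [mul_assoc, ← hFE]
  have htsA : ∑' n : ℕ, Real.exp (-a*((n:ℝ)+1)^2) * Real.cos (a*((n:ℝ)+1)^2*x)
      = ((jacobiTheta τ0 - 1)/2).re := hA.tsum_eq
  have htsB : ∑' n : ℕ, Real.exp (-b*((n:ℝ)+1)^2) * Real.cos (b*((n:ℝ)+1)^2*x - φ/2)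
      = (E * ((jacobiTheta τ1 - 1)/2)).re := hB.tsum_eq
  rw [htsA, htsB, hθ0]
  set T : ℂ := jacobiTheta τ1 with hT
  have hre : (((K:ℂ) * E) * T - 1)/2 = (K:ℂ) * (E * ((T-1)/2)) + (((K:ℂ) * E - 1)/2) := by
    ring
  rw [hre, Complex.add_re, Complex.re_ofReal_mul]
  have hEre : E.re = Real.cos (φ/2) := by
    rw [hE]; exact Complex.exp_ofReal_mul_I_re _
  have h3 : ((((K:ℂ) * E - 1)/2 : ℂ)).re = (K * Real.cos (φ/2) - 1)/2 := by
    rw [show ((2:ℂ)) = ((2:ℝ):ℂ) by norm_num, Complex.div_ofReal_re, Complex.sub_re,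
      Complex.re_ofReal_mul, hEre, Complex.one_re]
  rw [h3]
  have h4 : (1+x^2) ^ (-(1:ℝ)/4) = 1 / (1+x^2) ^ ((1:ℝ)/4) := by
    rw [show (-(1:ℝ)/4) = -((1:ℝ)/4) by ring, Real.rpow_neg h1x.le]
    exact (one_div _).symm
  rw [hK, h4]
  ring
end

section
/- Let a > 0 and x > 0, and set φ = arctan x and b = π²/(a(1+x²)). Then ∑_{n=1}^∞ e^{-an²} sin(an²x) = (1/2)√(π/a) · sin(φ/2)/(1+x²)^{1/4} - √(π/a) · (1+x²)^{-1/4} ∑_{n=1}^∞ e^{-b n²} sin(b n² x - φ/2), with both series absolutely convergent. -/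
open Real

private lemma aux_summable_exp {c : ℝ} (hc : 0 < c) :
    Summable (fun n : ℕ => Real.exp (-c * ((n : ℝ) + 1) ^ 2)) := by
  have h0 : (0:ℝ) ≤ Real.exp (-c) := (Real.exp_pos _).le
  have h1 : Real.exp (-c) < 1 := Real.exp_lt_one_iff.mpr (neg_neg_iff_pos.mpr hc)
  have hg : Summable (fun n : ℕ => Real.exp (-c) ^ (n + 1)) := by
    simpa [pow_succ'] using (summable_geometric_of_lt_one h0 h1).mul_left (Real.exp (-c))
  refine Summable.of_nonneg_of_le (fun n => (Real.exp_pos _).le) (fun n => ?_) hg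
  have he : Real.exp (-c * ((n : ℝ) + 1) ^ 2) = Real.exp (-c) ^ ((n + 1) ^ 2) := by
    rw [← Real.exp_nat_mul]
    congr 1
    push_cast
    ring
  rw [he]
  exact pow_le_pow_of_le_one h0 h1.le (Nat.le_self_pow two_ne_zero _)

private lemma aux_summable_abs {c : ℝ} (hc : 0 < c) (s : ℕ → ℝ) :
    Summable (fun n : ℕ => |Real.exp (-c * ((n : ℝ) + 1) ^ 2) * Real.sin (s n)|) := by
  refine Summable.of_nonneg_of_le (fun n => abs_nonneg _) (fun n => ?_) (aux_summable_exp hc)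
  rw [abs_mul, Real.abs_exp]
  exact mul_le_of_le_one_right (Real.exp_pos _).le
    (abs_le.mpr ⟨Real.neg_one_le_sin _, Real.sin_le_one _⟩)

theorem stmt_6 (a x φ b : ℝ) (ha : 0 < a) (hx : 0 < x) (hφ : φ = Real.arctan x)
    (hb : b = π ^ 2 / (a * (1 + x ^ 2))) :
    Summable (fun n : ℕ =>
      |Real.exp (-a * ((n : ℝ) + 1) ^ 2) * Real.sin (a * ((n : ℝ) + 1) ^ 2 * x)|) ∧
    Summable (fun n : ℕ =>
      |Real.exp (-b * ((n : ℝ) + 1) ^ 2) * Real.sin (b * ((n : ℝ) + 1) ^ 2 * x - φ / 2)|) ∧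
    ∑' n : ℕ, Real.exp (-a * ((n : ℝ) + 1) ^ 2) * Real.sin (a * ((n : ℝ) + 1) ^ 2 * x) =
      (1 / 2) * Real.sqrt (π / a) * Real.sin (φ / 2) / (1 + x ^ 2) ^ ((1 : ℝ) / 4) -
        Real.sqrt (π / a) * (1 + x ^ 2) ^ (-(1 : ℝ) / 4) *
          ∑' n : ℕ, Real.exp (-b * ((n : ℝ) + 1) ^ 2) *
            Real.sin (b * ((n : ℝ) + 1) ^ 2 * x - φ / 2) := by
  have hy : (0:ℝ) < 1 + x ^ 2 := by positivity
  have hπ : (0:ℝ) < π := Real.pi_pos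
  have hb' : 0 < b := by rw [hb]; positivity
  refine ⟨aux_summable_abs ha _, aux_summable_abs hb' _, ?_⟩
  have hπc : (π : ℂ) ≠ 0 := Complex.ofReal_ne_zero.mpr hπ.ne'
  set τ : ℂ := (↑a * ↑x + ↑a * Complex.I) / ↑π with hτ
  set τ' : ℂ := (-(↑b * ↑x) + ↑b * Complex.I) / ↑π with hτ'
  have hτim : 0 < τ.im := by
    rw [hτ]
    simp [Complex.div_im, Complex.add_im, Complex.mul_im]
    positivity
  have hτ'im : 0 < τ'.im := by
    rw [hτ']
    simp [Complex.div_im, Complex.add_im, Complex.mul_im]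
    positivity
  -- exponent computations
  have hA : ∀ n : ℕ, (↑π * Complex.I * ((n : ℂ) + 1) ^ 2 * τ) =
      Complex.ofReal (-(a * ((n : ℝ) + 1) ^ 2)) +
        Complex.ofReal (a * ((n : ℝ) + 1) ^ 2 * x) * Complex.I := by
    intro n
    rw [hτ]
    push_cast
    field_simp
    ring_nf
    simp only [Complex.I_sq]
    ring
  have hB : ∀ n : ℕ, (Complex.ofReal (φ / 2) * Complex.I +
      ↑π * Complex.I * ((n : ℂ) + 1) ^ 2 * τ') =
      Complex.ofReal (-(b * ((n : ℝ) + 1) ^ 2)) +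
        Complex.ofReal (φ / 2 - b * ((n : ℝ) + 1) ^ 2 * x) * Complex.I := by
    intro n
    rw [hτ']
    push_cast
    field_simp
    ring_nf
    simp only [Complex.I_sq]
    ring
  -- the three complex series
  set f : ℕ → ℂ := fun n => Complex.exp (↑π * Complex.I * ((n : ℂ) + 1) ^ 2 * τ) with hf
  set f' : ℕ → ℂ := fun n => Complex.exp (↑π * Complex.I * ((n : ℂ) + 1) ^ 2 * τ') with hf'
  set g : ℕ → ℂ := fun n => Complex.exp (Complex.ofReal (φ / 2) * Complex.I +
    ↑π * Complex.I * ((n : ℂ) + 1) ^ 2 * τ') with hg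
  have hnf : ∀ n : ℕ, ‖f n‖ = Real.exp (-a * ((n : ℝ) + 1) ^ 2) := by
    intro n
    rw [hf]
    simp only [Complex.norm_exp, hA n]
    simp only [Complex.add_re, Complex.add_im, Complex.ofReal_re, Complex.ofReal_im,
      Complex.mul_re, Complex.mul_im, Complex.I_re, Complex.I_im, mul_zero, zero_mul,
      mul_one, sub_zero, zero_sub, add_zero, zero_add, neg_zero]
    congr 1
    ring
  have hng : ∀ n : ℕ, ‖g n‖ = Real.exp (-b * ((n : ℝ) + 1) ^ 2) := by
    intro n
    rw [hg]
    simp only [Complex.norm_exp, hB n]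
    simp only [Complex.add_re, Complex.add_im, Complex.ofReal_re, Complex.ofReal_im,
      Complex.mul_re, Complex.mul_im, Complex.I_re, Complex.I_im, mul_zero, zero_mul,
      mul_one, sub_zero, zero_sub, add_zero, zero_add, neg_zero]
    congr 1
    ring
  have hexpg : ∀ n : ℕ, g n = Complex.exp (Complex.ofReal (φ / 2) * Complex.I) * f' n := by
    intro n
    rw [hg, hf']
    exact Complex.exp_add _ _
  have hnf' : ∀ n : ℕ, ‖f' n‖ = Real.exp (-b * ((n : ℝ) + 1) ^ 2) := by
    intro n
    have h2 : ‖g n‖ = ‖f' n‖ := by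
      rw [hexpg n, norm_mul]
      simp [Complex.norm_exp]
    rw [← h2, hng n]
  have hsf : Summable f := by
    apply Summable.of_norm
    simpa only [hnf] using aux_summable_exp ha
  have hsf' : Summable f' := by
    apply Summable.of_norm
    simpa only [hnf'] using aux_summable_exp hb'
  have hsg : Summable g := by
    apply Summable.of_norm
    simpa only [hng] using aux_summable_exp hb'
  -- imaginary parts of terms
  have hfim : ∀ n : ℕ, (f n).im =
      Real.exp (-a * ((n : ℝ) + 1) ^ 2) * Real.sin (a * ((n : ℝ) + 1) ^ 2 * x) := by
    intro n
    rw [hf]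
    simp only [hA n, Complex.exp_im]
    simp only [Complex.add_re, Complex.add_im, Complex.ofReal_re, Complex.ofReal_im,
      Complex.mul_re, Complex.mul_im, Complex.I_re, Complex.I_im, mul_zero, zero_mul,
      mul_one, sub_zero, zero_sub, add_zero, zero_add, neg_zero]
    rw [show -(a * ((n : ℝ) + 1) ^ 2) = -a * ((n : ℝ) + 1) ^ 2 by ring]
  have hgim : ∀ n : ℕ, (g n).im =
      -(Real.exp (-b * ((n : ℝ) + 1) ^ 2) *
        Real.sin (b * ((n : ℝ) + 1) ^ 2 * x - φ / 2)) := by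
    intro n
    rw [hg]
    simp only [hB n, Complex.exp_im]
    simp only [Complex.add_re, Complex.add_im, Complex.ofReal_re, Complex.ofReal_im,
      Complex.mul_re, Complex.mul_im, Complex.I_re, Complex.I_im, mul_zero, zero_mul,
      mul_one, sub_zero, zero_sub, add_zero, zero_add, neg_zero]
    rw [show φ / 2 - b * ((n : ℝ) + 1) ^ 2 * x = -(b * ((n : ℝ) + 1) ^ 2 * x - φ / 2) by ring,
      Real.sin_neg, show -(b * ((n : ℝ) + 1) ^ 2) = -b * ((n : ℝ) + 1) ^ 2 by ring]
    ring
  -- τ' = -1/τ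
  have hτne : τ ≠ 0 := fun h => by simp [h] at hτim
  have hbc : (b : ℂ) = (π : ℂ) ^ 2 / ((a : ℂ) * (1 + (x : ℂ) ^ 2)) := by
    rw [hb]; push_cast; ring
  have hac : (a : ℂ) ≠ 0 := Complex.ofReal_ne_zero.mpr ha.ne'
  have hyc : (1 + (x : ℂ) ^ 2) ≠ 0 := by
    rw [show (1 + (x : ℂ) ^ 2) = ((1 + x ^ 2 : ℝ) : ℂ) by push_cast; ring]
    exact Complex.ofReal_ne_zero.mpr hy.ne'
  have hττ' : (-τ)⁻¹ = τ' := by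
    apply inv_eq_of_mul_eq_one_left
    rw [hτ, hτ', hbc]
    field_simp
    ring_nf
    simp only [Complex.I_sq]
    have hD : ((π:ℂ) ^ 2 * (x:ℂ) ^ 2 * (a:ℂ) ^ 2 * 2 + (π:ℂ) ^ 2 * (x:ℂ) ^ 4 * (a:ℂ) ^ 2 +
        (π:ℂ) ^ 2 * (a:ℂ) ^ 2) ≠ 0 := by
      rw [show ((π:ℂ) ^ 2 * (x:ℂ) ^ 2 * (a:ℂ) ^ 2 * 2 + (π:ℂ) ^ 2 * (x:ℂ) ^ 4 * (a:ℂ) ^ 2 +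
          (π:ℂ) ^ 2 * (a:ℂ) ^ 2) = ((π ^ 2 * a ^ 2 * (1 + x ^ 2) ^ 2 : ℝ) : ℂ) by push_cast; ring]
      exact Complex.ofReal_ne_zero.mpr (by positivity)
    field_simp [hD]
    ring
  -- functional equation
  have hfe : jacobiTheta τ' = (-Complex.I * τ) ^ ((1 : ℂ) / 2) * jacobiTheta τ := by
    have h := jacobiTheta_S_smul (UpperHalfPlane.mk τ hτim)
    rw [UpperHalfPlane.modular_S_smul] at h
    simpa [UpperHalfPlane.coe_mk, hττ'] using h
  -- explicit value of the square root factor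
  set R : ℝ := a / π * Real.sqrt (1 + x ^ 2) with hRdef
  have hR : 0 < R := by rw [hRdef]; positivity
  have hzval : -Complex.I * τ = Complex.ofReal (a / π) * (1 - ↑x * Complex.I) := by
    rw [hτ]; push_cast; field_simp; ring_nf; simp only [Complex.I_sq]; ring
  have habs : ‖-Complex.I * τ‖ = R := by
    rw [hzval, norm_mul, Complex.norm_real, Real.norm_eq_abs, abs_of_pos (by positivity), hRdef]
    congr 1
    rw [show (1 - ↑x * Complex.I : ℂ) = Complex.ofReal 1 + Complex.ofReal (-x) * Complex.I by
      push_cast; ring, Complex.norm_def, Complex.normSq_add_mul_I]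
    norm_num
  have harg : (-Complex.I * τ).arg = -φ := by
    have hre : (-Complex.I * τ).re = a / π := by rw [hzval]; simp
    have him : (-Complex.I * τ).im = a / π * (-x) := by rw [hzval]; simp
    rw [Complex.arg_of_re_nonneg (by rw [hre]; positivity), him, habs, hRdef]
    have hsq : Real.sqrt (1 + x ^ 2) ≠ 0 := by positivity
    have haπ : a / π ≠ 0 := by positivity
    rw [show a / π * (-x) / (a / π * Real.sqrt (1 + x ^ 2)) = -(x / Real.sqrt (1 + x ^ 2)) by
      field_simp, Real.arcsin_neg, ← Real.arctan_eq_arcsin, hφ]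
  have hzne : -Complex.I * τ ≠ 0 := mul_ne_zero (neg_ne_zero.mpr Complex.I_ne_zero) hτne
  have hlog : Complex.log (-Complex.I * τ) =
      Complex.ofReal (Real.log R) + Complex.ofReal (-φ) * Complex.I := by
    apply Complex.ext
    · rw [Complex.log_re, habs]; simp
    · rw [Complex.log_im, harg]; simp
  have hw : (-Complex.I * τ) ^ ((1 : ℂ) / 2) =
      Complex.ofReal (Real.sqrt R) * Complex.exp (Complex.ofReal (-(φ / 2)) * Complex.I) := by
    rw [Complex.cpow_def_of_ne_zero hzne, hlog,
      show (Complex.ofReal (Real.log R) + Complex.ofReal (-φ) * Complex.I) * ((1 : ℂ) / 2) =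
        Complex.ofReal (Real.log R / 2) + Complex.ofReal (-(φ / 2)) * Complex.I by
          push_cast; ring,
      Complex.exp_add]
    congr 1
    rw [← Complex.ofReal_exp]
    congr 1
    rw [← Real.log_sqrt hR.le, Real.exp_log (Real.sqrt_pos.mpr hR)]
  set r : ℝ := Real.sqrt (π / a) * (1 + x ^ 2) ^ (-(1 : ℝ) / 4) with hrdef
  have h14 : Real.sqrt (Real.sqrt (1 + x ^ 2)) = (1 + x ^ 2) ^ ((1 : ℝ) / 4) := by
    rw [Real.sqrt_eq_rpow, Real.sqrt_eq_rpow, ← Real.rpow_mul hy.le]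
    norm_num
  have hr : Real.sqrt R * r = 1 := by
    rw [hRdef, Real.sqrt_mul (by positivity), h14, hrdef]
    rw [show Real.sqrt (a / π) * (1 + x ^ 2) ^ ((1 : ℝ) / 4) *
        (Real.sqrt (π / a) * (1 + x ^ 2) ^ (-(1 : ℝ) / 4)) =
        (Real.sqrt (a / π) * Real.sqrt (π / a)) *
          ((1 + x ^ 2) ^ ((1 : ℝ) / 4) * (1 + x ^ 2) ^ (-(1 : ℝ) / 4)) by ring,
      ← Real.sqrt_mul (by positivity), show a / π * (π / a) = 1 by field_simp,
      Real.sqrt_one, ← Real.rpow_add hy]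
    norm_num
  have hkey : jacobiTheta τ = jacobiTheta τ' *
      (Complex.ofReal r * Complex.exp (Complex.ofReal (φ / 2) * Complex.I)) := by
    have hone : (Complex.ofReal (Real.sqrt R) * Complex.exp (Complex.ofReal (-(φ / 2)) * Complex.I)) *
        (Complex.ofReal r * Complex.exp (Complex.ofReal (φ / 2) * Complex.I)) = 1 := by
      rw [mul_mul_mul_comm, ← Complex.ofReal_mul, hr, ← Complex.exp_add,
        show Complex.ofReal (-(φ / 2)) * Complex.I + Complex.ofReal (φ / 2) * Complex.I = 0 by
          push_cast; ring]
      simp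
    calc jacobiTheta τ = jacobiTheta τ *
        ((Complex.ofReal (Real.sqrt R) * Complex.exp (Complex.ofReal (-(φ / 2)) * Complex.I)) *
          (Complex.ofReal r * Complex.exp (Complex.ofReal (φ / 2) * Complex.I))) := by
          rw [hone, mul_one]
      _ = jacobiTheta τ' * (Complex.ofReal r * Complex.exp (Complex.ofReal (φ / 2) * Complex.I)) := by
          rw [hfe, hw]; ring
  -- series expansions of theta
  have hθτ : jacobiTheta τ = 1 + 2 * ∑' n, f n := by
    rw [jacobiTheta_eq_tsum_nat hτim]
  have hθτ' : jacobiTheta τ' = 1 + 2 * ∑' n, f' n := by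
    rw [jacobiTheta_eq_tsum_nat hτ'im]
  have hG : (∑' n, g n) = Complex.exp (Complex.ofReal (φ / 2) * Complex.I) * ∑' n, f' n := by
    calc (∑' n, g n) = ∑' n, Complex.exp (Complex.ofReal (φ / 2) * Complex.I) * f' n :=
          tsum_congr hexpg
      _ = _ := tsum_mul_left
  have hSf : (∑' n, f n).im = ∑' n, (f n).im := by
    simpa using Complex.imCLM.map_tsum hsf
  have hSg : (∑' n, g n).im = ∑' n, (g n).im := by
    simpa using Complex.imCLM.map_tsum hsg
  have hLHS : (∑' n : ℕ, Real.exp (-a * ((n : ℝ) + 1) ^ 2) * Real.sin (a * ((n : ℝ) + 1) ^ 2 * x))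
      = (∑' n, f n).im := by
    rw [hSf]
    exact tsum_congr fun n => (hfim n).symm
  have hT : (∑' n : ℕ, Real.exp (-b * ((n : ℝ) + 1) ^ 2) *
      Real.sin (b * ((n : ℝ) + 1) ^ 2 * x - φ / 2)) = -(∑' n, g n).im := by
    rw [hSg, ← tsum_neg]
    exact tsum_congr fun n => by rw [hgim n, neg_neg]
  have hθim : (jacobiTheta τ).im = 2 * (∑' n, f n).im := by rw [hθτ]; simp
  have hθim2 : (jacobiTheta τ).im = r * Real.sin (φ / 2) + 2 * r * (∑' n, g n).im := by
    have hexpand : jacobiTheta τ = Complex.ofReal r * Complex.exp (Complex.ofReal (φ / 2) * Complex.I) +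
        2 * Complex.ofReal r * (∑' n, g n) := by
      rw [hkey, hθτ', hG]; ring
    rw [hexpand, Complex.add_im,
      show (2 * Complex.ofReal r * (∑' n, g n)) = Complex.ofReal (2 * r) * (∑' n, g n) by
        push_cast; ring,
      Complex.im_ofReal_mul, Complex.im_ofReal_mul, Complex.exp_ofReal_mul_I_im]
  rw [hLHS, hT, show (∑' n, f n).im = ((jacobiTheta τ).im) / 2 by rw [hθim]; ring, hθim2, hrdef,
    show (-(1 : ℝ) / 4) = -((1 : ℝ) / 4) by norm_num, Real.rpow_neg hy.le]
  have hy4 : ((1 + x ^ 2) ^ ((1 : ℝ) / 4)) ≠ 0 := (Real.rpow_pos_of_pos hy _).ne'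
  field_simp
  ring
end

section
/- For every real α and every real x with |x| < 1, the series ∑_{r=0}^∞ ((α)_r (α+1/2)_r / ((1/2)_r · r!)) (-x²)^r converges absolutely and equals (1+x²)^{-α} cos(2α arctan x). -/
open Real

private lemma asc_cast (n : ℕ) (a : ℝ) :
    (ascPochhammer ℂ n).eval ((a : ℂ)) = (((ascPochhammer ℝ n).eval a : ℝ) : ℂ) := by
  induction n with
  | zero => simp
  | succ n ih =>
    rw [ascPochhammer_succ_eval, ascPochhammer_succ_eval, ih]
    push_cast
    ring

private lemma dup_asc (y : ℝ) : ∀ r : ℕ, (ascPochhammer ℝ (2 * r)).eval (2 * y) =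
    4 ^ r * (ascPochhammer ℝ r).eval y * (ascPochhammer ℝ r).eval (y + 1 / 2)
  | 0 => by simp
  | r + 1 => by
    have h2 : 2 * (r + 1) = (2 * r + 1) + 1 := by ring
    rw [h2, ascPochhammer_succ_eval, ascPochhammer_succ_eval, dup_asc y r,
      ascPochhammer_succ_eval, ascPochhammer_succ_eval]
    push_cast
    ring

private lemma fact_eq : ∀ r : ℕ, ((2 * r).factorial : ℝ) =
    4 ^ r * (ascPochhammer ℝ r).eval (1 / 2) * (r.factorial : ℝ)
  | 0 => by simp
  | r + 1 => by
    have h2 : 2 * (r + 1) = (2 * r + 1) + 1 := by ring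
    rw [h2, Nat.factorial_succ, Nat.factorial_succ, Nat.factorial_succ,
      ascPochhammer_succ_eval]
    push_cast
    rw [fact_eq r]
    push_cast
    ring

private lemma term_eq (α x : ℝ) (r : ℕ) :
    (ascPochhammer ℝ r).eval α * (ascPochhammer ℝ r).eval (α + 1 / 2) /
        ((ascPochhammer ℝ r).eval (1 / 2) * (Nat.factorial r)) * (-x ^ 2) ^ r =
      (ascPochhammer ℝ (2 * r)).eval (2 * α) / ((2 * r).factorial : ℝ) * (-x ^ 2) ^ r := by
  rw [dup_asc, fact_eq]
  have h1 : (0 : ℝ) < (ascPochhammer ℝ r).eval (1 / 2) :=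
    ascPochhammer_pos r _ (by norm_num)
  have h2 : (0 : ℝ) < (r.factorial : ℝ) := by positivity
  have h4 : (0 : ℝ) < (4 : ℝ) ^ r := by positivity
  field_simp

open Complex in
private lemma binom_hasSum (b : ℂ) {z : ℂ} (hz : ‖z‖ < 1) :
    HasSum (fun k : ℕ => (ascPochhammer ℂ k).eval b / (Nat.factorial k : ℂ) * z ^ k)
      ((1 - z) ^ (-b)) := by
  have hslit : ∀ w : ℂ, w ∈ Metric.ball (0 : ℂ) 1 → (1 + w) ∈ slitPlane := by
    intro w hw
    rw [mem_ball_zero_iff] at hw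
    refine Or.inl ?_
    have h1 : |w.re| ≤ ‖w‖ := abs_re_le_norm w
    simp only [add_re, one_re]
    have h2 := abs_lt.mp (lt_of_le_of_lt h1 hw)
    linarith [h2.1]
  set f : ℂ → ℂ := fun w => (1 + w) ^ (-b) with hf
  have hdiff : DifferentiableOn ℂ f (Metric.ball (0 : ℂ) 1) := by
    intro w hw
    exact (((differentiableAt_id.const_add 1).cpow (differentiableAt_const _)
      (hslit w hw))).differentiableWithinAt
  have hiter : ∀ n : ℕ, ∀ w ∈ Metric.ball (0 : ℂ) 1,
      iteratedDeriv n f w = (descPochhammer ℂ n).eval (-b) * (1 + w) ^ (-b - n) := by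
    intro n
    induction n with
    | zero => intro w hw; simp [f]
    | succ n ih =>
      intro w hw
      have hev : iteratedDeriv n f =ᶠ[nhds w]
          fun u => (descPochhammer ℂ n).eval (-b) * (1 + u) ^ (-b - n) :=
        Filter.eventuallyEq_of_mem (Metric.isOpen_ball.mem_nhds hw) ih
      rw [iteratedDeriv_succ, hev.deriv_eq]
      have hd : HasDerivAt (fun u : ℂ => (descPochhammer ℂ n).eval (-b) * (1 + u) ^ (-b - n))
          ((descPochhammer ℂ n).eval (-b) * ((-b - n) * (1 + w) ^ (-b - n - 1) * 1)) w :=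
        (((hasDerivAt_id w).const_add 1).cpow_const (hslit w hw)).const_mul _
      rw [hd.deriv, descPochhammer_succ_eval]
      have he : (-b - (n : ℂ) - 1) = -b - ((n : ℕ) + 1 : ℕ) := by push_cast; ring
      rw [he]
      push_cast
      ring
  have key : ∀ w : ℂ, ‖w‖ < 1 →
      HasSum (fun n : ℕ => ((Nat.factorial n : ℂ))⁻¹ * (descPochhammer ℂ n).eval (-b) * w ^ n)
        ((1 + w) ^ (-b)) := by
    intro w hw
    have h0 : (0 : ℂ) ∈ Metric.ball (0 : ℂ) 1 := by simp
    have hw' : w ∈ Metric.ball (0 : ℂ) 1 := mem_ball_zero_iff.mpr hw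
    have H := Complex.hasSum_taylorSeries_on_ball hdiff hw'
    have hfw : f w = (1 + w) ^ (-b) := rfl
    rw [hfw] at H
    convert H using 1
    · rfl
    funext n
    rw [hiter n 0 h0]
    have : (1 : ℂ) + 0 = 1 := add_zero 1
    rw [this, Complex.one_cpow]
    simp only [smul_eq_mul, sub_zero]
    ring
  have h2 := key (-z) (by simpa using hz)
  rw [← sub_eq_add_neg] at h2
  convert h2 using 1
  funext n
  have hd : (descPochhammer ℂ n).eval (-b) = (-1 : ℂ) ^ n * (ascPochhammer ℂ n).eval b := by
    have h := ascPochhammer_eval_neg_eq_descPochhammer (R := ℂ) (-b) n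
    rw [neg_neg] at h
    rw [h]
    have hnn : ((-1 : ℂ)) ^ n * (-1 : ℂ) ^ n = 1 := by
      rw [← mul_pow]; norm_num
    rw [← mul_assoc, hnn, one_mul]
  rw [hd, neg_pow z n]
  have hnn : ((-1 : ℂ)) ^ n * (-1 : ℂ) ^ n = 1 := by
    rw [← mul_pow]; norm_num
  linear_combination (-((ascPochhammer ℂ n).eval b * z ^ n / ((n.factorial : ℕ) : ℂ))) * hnn

theorem stmt_10 (α x : ℝ) (hx : |x| < 1) :
    Summable (fun r : ℕ =>
      |(ascPochhammer ℝ r).eval α * (ascPochhammer ℝ r).eval (α + 1 / 2) /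
        ((ascPochhammer ℝ r).eval (1 / 2) * (Nat.factorial r)) * (-x ^ 2) ^ r|) ∧
    ∑' r : ℕ, (ascPochhammer ℝ r).eval α * (ascPochhammer ℝ r).eval (α + 1 / 2) /
        ((ascPochhammer ℝ r).eval (1 / 2) * (Nat.factorial r)) * (-x ^ 2) ^ r =
      (1 + x ^ 2) ^ (-α) * Real.cos (2 * α * Real.arctan x) := by
  set b : ℂ := ((2 * α : ℝ) : ℂ) with hbdef
  have hIx : ‖Complex.I * (x : ℂ)‖ < 1 := by
    rw [norm_mul, Complex.norm_I, one_mul, Complex.norm_real, Real.norm_eq_abs]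
    exact hx
  have h1 := binom_hasSum b hIx
  have h2 := binom_hasSum b (z := -(Complex.I * (x : ℂ))) (by rwa [norm_neg])
  rw [sub_neg_eq_add] at h2
  have h3 := (h1.add h2).div_const 2
  have hinj : Function.Injective (fun r : ℕ => 2 * r) := fun a b h => by
    simpa using h
  have hvanish : ∀ k ∉ Set.range (fun r : ℕ => 2 * r),
      ((ascPochhammer ℂ k).eval b / (Nat.factorial k : ℂ) * (Complex.I * (x : ℂ)) ^ k +
        (ascPochhammer ℂ k).eval b / (Nat.factorial k : ℂ) * (-(Complex.I * (x : ℂ))) ^ k) / 2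
        = 0 := by
    intro k hk
    have hodd : Odd k := by
      rcases Nat.even_or_odd k with he | ho
      · obtain ⟨m, hm⟩ := he
        exact absurd ⟨m, by dsimp only; omega⟩ hk
      · exact ho
    rw [hodd.neg_pow]
    ring
  have h4 := (Function.Injective.hasSum_iff
      (f := fun k : ℕ =>
        ((ascPochhammer ℂ k).eval b / (Nat.factorial k : ℂ) * (Complex.I * (x : ℂ)) ^ k +
          (ascPochhammer ℂ k).eval b / (Nat.factorial k : ℂ) * (-(Complex.I * (x : ℂ))) ^ k) / 2)
      hinj hvanish).mpr h3
  have hterm : ∀ r : ℕ,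
      ((ascPochhammer ℂ (2 * r)).eval b / (Nat.factorial (2 * r) : ℂ)
          * (Complex.I * (x : ℂ)) ^ (2 * r) +
        (ascPochhammer ℂ (2 * r)).eval b / (Nat.factorial (2 * r) : ℂ)
          * (-(Complex.I * (x : ℂ))) ^ (2 * r)) / 2 =
      (((ascPochhammer ℝ r).eval α * (ascPochhammer ℝ r).eval (α + 1 / 2) /
          ((ascPochhammer ℝ r).eval (1 / 2) * (Nat.factorial r)) * (-x ^ 2) ^ r : ℝ) : ℂ) := by
    intro r
    rw [term_eq α x r, Even.neg_pow ⟨r, by ring⟩]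
    have hp : ((Complex.I * (x : ℂ))) ^ (2 * r) = (((-x ^ 2 : ℝ)) : ℂ) ^ r := by
      rw [pow_mul]
      congr 1
      rw [mul_pow, Complex.I_sq]
      push_cast
      ring
    rw [hp, hbdef, asc_cast]
    push_cast
    ring
  have hS : ((1 - Complex.I * (x : ℂ)) ^ (-b) + (1 + Complex.I * (x : ℂ)) ^ (-b)) / 2 =
      (((1 + x ^ 2) ^ (-α) * Real.cos (2 * α * Real.arctan x) : ℝ) : ℂ) := by
    set w : ℂ := 1 + Complex.I * (x : ℂ) with hw
    have hwre : w.re = 1 := by simp [hw]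
    have hwim : w.im = x := by simp [hw]
    have hw0 : w ≠ 0 := by
      intro h
      have := congrArg Complex.re h
      rw [hwre, Complex.zero_re] at this
      norm_num at this
    have hconj : (starRingEnd ℂ) w = 1 - Complex.I * (x : ℂ) := by
      rw [hw, map_add, map_one, map_mul, Complex.conj_I, Complex.conj_ofReal]
      ring
    have hargpi : w.arg ≠ π := by
      rw [Ne, Complex.arg_eq_pi_iff, hwre]
      rintro ⟨h, -⟩
      norm_num at h
    have hcb : (starRingEnd ℂ) (-b) = -b := by
      rw [hbdef, map_neg, Complex.conj_ofReal]
    have h1' : (1 - Complex.I * (x : ℂ)) ^ (-b) = (starRingEnd ℂ) (w ^ (-b)) := by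
      rw [← hconj, Complex.conj_cpow _ _ hargpi, hcb]
    have habs : ‖w‖ = Real.sqrt (1 + x ^ 2) := by
      rw [Complex.norm_def, Complex.normSq_apply, hwre, hwim]
      congr 1
      ring
    have harg : w.arg = Real.arctan x := by
      rw [Complex.arg_of_re_nonneg (by rw [hwre]; norm_num), hwim, habs,
        Real.arctan_eq_arcsin]
    have hrect : w ^ (-b) = Complex.exp (Complex.log w * (-b)) :=
      Complex.cpow_def_of_ne_zero hw0 _
    have hre2 : (Complex.log w * (-b)).re = Real.log (1 + x ^ 2) * (-α) := by
      rw [hbdef, Complex.mul_re, Complex.log_re, Complex.log_im, habs,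
        Real.log_sqrt (by positivity)]
      simp only [Complex.neg_re, Complex.ofReal_re, Complex.neg_im, Complex.ofReal_im]
      ring
    have him2 : (Complex.log w * (-b)).im = -(2 * α * Real.arctan x) := by
      rw [hbdef, Complex.mul_im, Complex.log_im, Complex.log_re, harg]
      simp only [Complex.neg_re, Complex.ofReal_re, Complex.neg_im, Complex.ofReal_im]
      ring
    have hre3 : (w ^ (-b)).re = (1 + x ^ 2) ^ (-α) * Real.cos (2 * α * Real.arctan x) := by
      rw [hrect, Complex.exp_re, hre2, him2, Real.cos_neg]
      congr 1
      rw [Real.rpow_def_of_pos (by positivity)]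
    rw [h1', add_comm ((starRingEnd ℂ) (w ^ (-b))) (w ^ (-b)), Complex.add_conj, hre3]
    push_cast
    ring
  have h5 : HasSum (fun r : ℕ =>
      (((ascPochhammer ℝ r).eval α * (ascPochhammer ℝ r).eval (α + 1 / 2) /
          ((ascPochhammer ℝ r).eval (1 / 2) * (Nat.factorial r)) * (-x ^ 2) ^ r : ℝ) : ℂ))
      (((1 + x ^ 2) ^ (-α) * Real.cos (2 * α * Real.arctan x) : ℝ) : ℂ) := by
    have hfun : (fun r : ℕ =>
        (((ascPochhammer ℝ r).eval α * (ascPochhammer ℝ r).eval (α + 1 / 2) /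
            ((ascPochhammer ℝ r).eval (1 / 2) * (Nat.factorial r)) * (-x ^ 2) ^ r : ℝ) : ℂ)) =
        ((fun k : ℕ =>
          ((ascPochhammer ℂ k).eval b / (Nat.factorial k : ℂ) * (Complex.I * (x : ℂ)) ^ k +
            (ascPochhammer ℂ k).eval b / (Nat.factorial k : ℂ)
              * (-(Complex.I * (x : ℂ))) ^ k) / 2) ∘ fun r : ℕ => 2 * r) := by
      funext r
      exact (hterm r).symm
    rw [hfun, ← hS]
    exact h4
  have h6 := Complex.hasSum_ofReal.mp h5
  -- summability of absolute values
  set y : ℝ := (1 + |x|) / 2 with hy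
  have hy0 : 0 < y := by positivity
  have hxy : |x| < y := by rw [hy]; linarith
  have hy1 : y < 1 := by rw [hy]; linarith
  have hsumy := (binom_hasSum b (z := (y : ℂ))
      (by rw [Complex.norm_real, Real.norm_eq_abs, abs_of_pos hy0]; exact hy1)).summable
  obtain ⟨C, hC⟩ := hsumy.tendsto_atTop_zero.norm.bddAbove_range
  have hCk : ∀ k : ℕ, |(ascPochhammer ℝ k).eval (2 * α) / (Nat.factorial k) * y ^ k| ≤ C := by
    intro k
    have hmem := hC (Set.mem_range_self k)
    have hce : (ascPochhammer ℂ k).eval b / (Nat.factorial k : ℂ) * ((y : ℝ) : ℂ) ^ k =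
        (((ascPochhammer ℝ k).eval (2 * α) / (Nat.factorial k) * y ^ k : ℝ) : ℂ) := by
      rw [hbdef, asc_cast]
      push_cast
      ring
    rw [hce, Complex.norm_real, Real.norm_eq_abs] at hmem
    exact hmem
  set q : ℝ := x ^ 2 / y ^ 2 with hq
  have hq0 : (0 : ℝ) ≤ q := by positivity
  have hq1 : q < 1 := by
    rw [hq, div_lt_one (by positivity)]
    nlinarith [sq_abs x, abs_nonneg x]
  have hx2 : x ^ 2 = y ^ 2 * q := by
    rw [hq]
    field_simp
  have hbound : ∀ r : ℕ,
      |(ascPochhammer ℝ r).eval α * (ascPochhammer ℝ r).eval (α + 1 / 2) /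
        ((ascPochhammer ℝ r).eval (1 / 2) * (Nat.factorial r)) * (-x ^ 2) ^ r| ≤ C * q ^ r := by
    intro r
    rw [term_eq α x r]
    have hkey : |(ascPochhammer ℝ (2 * r)).eval (2 * α) / ((2 * r).factorial : ℝ)
          * (-x ^ 2) ^ r| =
        |(ascPochhammer ℝ (2 * r)).eval (2 * α) / ((2 * r).factorial : ℝ) * y ^ (2 * r)|
          * q ^ r := by
      rw [abs_mul, abs_mul, abs_pow, abs_pow, abs_neg, abs_of_nonneg (sq_nonneg x),
        abs_of_pos hy0, hx2, mul_pow, ← pow_mul, mul_assoc]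
    rw [hkey]
    exact mul_le_mul_of_nonneg_right (hCk (2 * r)) (by positivity)
  refine ⟨?_, h6.tsum_eq⟩
  refine Summable.of_nonneg_of_le (fun r => abs_nonneg _) hbound ?_
  exact (summable_geometric_of_lt_one hq0 hq1).mul_left C
end

section
/- For every natural number k and every real x, ∑_{r=0}^{k} ((-k)_r (-k-1/2)_r / ((1/2)_r · r!)) (-x²)^r = (1+x²)^{k+1/2} cos((2k+1) arctan x). -/
open Real

open Finset in
private lemma sum_range_two_mul' {M : Type*} [AddCommMonoid M] (f : ℕ → M) (n : ℕ) :
    ∑ j ∈ Finset.range (2 * n), f j = ∑ r ∈ Finset.range n, (f (2 * r) + f (2 * r + 1)) := by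
  induction n with
  | zero => simp
  | succ n ih =>
    have h : 2 * (n + 1) = 2 * n + 1 + 1 := by ring
    rw [h, Finset.sum_range_succ, Finset.sum_range_succ, ih, Finset.sum_range_succ, add_assoc]

private lemma poch_choose (k : ℕ) : ∀ r, r ≤ k →
    (ascPochhammer ℝ r).eval (-(k : ℝ)) * (ascPochhammer ℝ r).eval (-(k : ℝ) - 1 / 2) =
      ((2 * k + 1).choose (2 * r) : ℝ) * ((ascPochhammer ℝ r).eval (1 / 2) * (Nat.factorial r)) := by
  intro r
  induction r with
  | zero => simp
  | succ r ih =>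
    intro hr
    have hr' : r ≤ k := Nat.le_of_succ_le hr
    have IH := ih hr'
    have h2e : 2 * (r + 1) = 2 * r + 2 := by ring
    rw [h2e, ascPochhammer_succ_eval, ascPochhammer_succ_eval, ascPochhammer_succ_eval]
    have hle1 : 2 * r ≤ 2 * k + 1 := by omega
    have hle2 : 2 * r + 1 ≤ 2 * k + 1 := by omega
    have h1 := Nat.choose_succ_right_eq (2 * k + 1) (2 * r)
    have h2n : (2 * k + 1).choose (2 * r + 2) * (2 * r + 2) =
        (2 * k + 1).choose (2 * r + 1) * (2 * k - 2 * r) := by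
      have h := Nat.choose_succ_right_eq (2 * k + 1) (2 * r + 1)
      rwa [show 2 * r + 1 + 1 = 2 * r + 2 from by omega,
        show 2 * k + 1 - (2 * r + 1) = 2 * k - 2 * r from by omega] at h
    have h1' : ((2 * k + 1).choose (2 * r + 1) : ℝ) * (2 * r + 1) =
        ((2 * k + 1).choose (2 * r) : ℝ) * (2 * k + 1 - 2 * r) := by
      have := congrArg (fun n : ℕ => (n : ℝ)) h1
      push_cast [Nat.cast_sub hle1] at this
      linarith [this]
    have h2' : ((2 * k + 1).choose (2 * r + 2) : ℝ) * (2 * r + 2) =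
        ((2 * k + 1).choose (2 * r + 1) : ℝ) * (2 * k - 2 * r) := by
      have := congrArg (fun n : ℕ => (n : ℝ)) h2n
      push_cast [Nat.cast_sub (show 2 * r ≤ 2 * k by omega)] at this
      linarith [this]
    have hc : ((2 * k + 1).choose (2 * r + 2) : ℝ) * ((2 * r + 1) * (2 * r + 2)) =
        ((2 * k + 1).choose (2 * r) : ℝ) * ((2 * (k:ℝ) + 1 - 2 * r) * (2 * k - 2 * r)) := by
      linear_combination (2 * (k:ℝ) - 2 * r) * h1' + (2 * (r:ℝ) + 1) * h2'
    push_cast [Nat.factorial_succ]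
    linear_combination ((-(k:ℝ) + r) * (-(k:ℝ) - 1/2 + r)) * IH -
      ((ascPochhammer ℝ r).eval (1/2 : ℝ) * (Nat.factorial r : ℝ) / 4) * hc

theorem stmt_12 (k : ℕ) (x : ℝ) :
    ∑ r ∈ Finset.range (k + 1),
        (ascPochhammer ℝ r).eval (-(k : ℝ)) * (ascPochhammer ℝ r).eval (-(k : ℝ) - 1 / 2) /
          ((ascPochhammer ℝ r).eval (1 / 2) * (Nat.factorial r)) * (-x ^ 2) ^ r =
      (1 + x ^ 2) ^ ((k : ℝ) + 1 / 2) * Real.cos ((2 * (k : ℝ) + 1) * Real.arctan x) := by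
  have hx : (0:ℝ) ≤ 1 + x ^ 2 := by positivity
  have hsqrt : (0:ℝ) < Real.sqrt (1 + x ^ 2) := Real.sqrt_pos.2 (by positivity)
  -- Step 1: LHS = binomial sum
  have lhs_eq : ∑ r ∈ Finset.range (k + 1),
        (ascPochhammer ℝ r).eval (-(k : ℝ)) * (ascPochhammer ℝ r).eval (-(k : ℝ) - 1 / 2) /
          ((ascPochhammer ℝ r).eval (1 / 2) * (Nat.factorial r)) * (-x ^ 2) ^ r =
      ∑ r ∈ Finset.range (k + 1), ((2 * k + 1).choose (2 * r) : ℝ) * (-x ^ 2) ^ r := by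
    refine Finset.sum_congr rfl fun r hr => ?_
    have hrk : r ≤ k := Nat.lt_succ_iff.mp (Finset.mem_range.mp hr)
    have hne : (ascPochhammer ℝ r).eval (1/2 : ℝ) * (Nat.factorial r : ℝ) ≠ 0 := by
      have h1 : (0:ℝ) < (ascPochhammer ℝ r).eval (1/2 : ℝ) :=
        ascPochhammer_pos r (1/2 : ℝ) (by norm_num)
      have h2 : (0:ℝ) < (Nat.factorial r : ℝ) := by positivity
      positivity
    rw [div_eq_iff hne |>.2 (poch_choose k r hrk)]
  rw [lhs_eq]
  -- Step 2: complex polar form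
  have habs : ((Real.sqrt (1 + x ^ 2) : ℝ) : ℂ) * Complex.exp ((Real.arctan x : ℝ) * Complex.I)
      = 1 + (x : ℂ) * Complex.I := by
    have hne : ((Real.sqrt (1 + x ^ 2) : ℝ) : ℂ) ≠ 0 := by
      exact_mod_cast hsqrt.ne'
    rw [Complex.exp_mul_I, ← Complex.ofReal_cos, ← Complex.ofReal_sin,
      Real.cos_arctan, Real.sin_arctan]
    push_cast
    field_simp
  have hpow : ((1:ℂ) + (x:ℂ) * Complex.I) ^ (2 * k + 1) =
      ((Real.sqrt (1 + x ^ 2) ^ (2 * k + 1) : ℝ) : ℂ) *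
        Complex.exp (((2 * (k:ℝ) + 1) * Real.arctan x : ℝ) * Complex.I) := by
    rw [← habs, mul_pow, ← Complex.exp_nat_mul]
    push_cast
    ring_nf
  have hre : (((1:ℂ) + (x:ℂ) * Complex.I) ^ (2 * k + 1)).re =
      Real.sqrt (1 + x ^ 2) ^ (2 * k + 1) * Real.cos ((2 * (k:ℝ) + 1) * Real.arctan x) := by
    rw [hpow, Complex.re_ofReal_mul, Complex.exp_ofReal_mul_I_re]
  have hsq : Real.sqrt (1 + x ^ 2) ^ (2 * k + 1) = (1 + x ^ 2) ^ ((k : ℝ) + 1 / 2) := by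
    rw [Real.sqrt_eq_rpow, ← Real.rpow_natCast ((1 + x ^ 2) ^ ((1:ℝ)/2)) (2 * k + 1),
      ← Real.rpow_mul hx]
    congr 1
    push_cast
    ring
  rw [← hsq, ← hre]
  -- Step 3: binomial expansion
  have hbin : ((1:ℂ) + (x:ℂ) * Complex.I) ^ (2 * k + 1) =
      ∑ j ∈ Finset.range (2 * (k + 1)),
        ((x:ℂ) * Complex.I) ^ j * 1 ^ (2 * k + 1 - j) * ((2 * k + 1).choose j : ℂ) := by
    rw [add_comm]
    have h : 2 * (k + 1) = 2 * k + 1 + 1 := by ring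
    rw [h]
    exact add_pow _ _ _
  rw [hbin, Complex.re_sum, sum_range_two_mul']
  refine Finset.sum_congr rfl fun r _ => ?_
  have h2 : ((x:ℂ) * Complex.I) ^ (2 * r) = (((-x ^ 2 : ℝ)) : ℂ) ^ r := by
    rw [pow_mul]
    congr 1
    push_cast
    rw [mul_pow, Complex.I_sq]
    ring
  have e1 : (((x:ℂ) * Complex.I) ^ (2*r) * 1 ^ (2*k+1 - 2*r) * ((2*k+1).choose (2*r) : ℂ)).re
      = ((2*k+1).choose (2*r) : ℝ) * (-x^2)^r := by
    rw [h2, one_pow, mul_one, ← Complex.ofReal_pow,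
      show ((((-x^2)^r : ℝ)) : ℂ) * ((2*k+1).choose (2*r) : ℂ)
        = ((((2*k+1).choose (2*r) : ℝ) * (-x^2)^r : ℝ) : ℂ) by push_cast; ring]
    exact Complex.ofReal_re _
  have e2 : (((x:ℂ) * Complex.I) ^ (2*r+1) * 1 ^ (2*k+1 - (2*r+1)) * ((2*k+1).choose (2*r+1) : ℂ)).re
      = 0 := by
    rw [pow_succ, h2, one_pow, mul_one, ← Complex.ofReal_pow,
      show ((((-x^2)^r : ℝ)) : ℂ) * ((x:ℂ) * Complex.I) * ((2*k+1).choose (2*r+1) : ℂ)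
        = (((((-x^2)^r * x * ((2*k+1).choose (2*r+1)) : ℝ))) : ℂ) * Complex.I by push_cast; ring]
    rw [Complex.re_ofReal_mul, Complex.I_re, mul_zero]
  rw [e1, e2, add_zero]
end

section
/- Fix x > 0 and set φ = arctan x. There exists a constant C > 0 such that for all 0 < a ≤ 1, |∑_{n=1}^∞ e^{-an²} cos(an²x) - (1/2)√(π/a) · cos(φ/2)/(1+x²)^{1/4} + 1/2| ≤ C a^{-1/2} exp(-π²/(a(1+x²))); in particular, for p = 2 the correction to the algebraic part of the expansion is exponentially small as a → 0⁺. -/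
open Real

set_option maxHeartbeats 2000000 in
theorem stmt_15 (x φ : ℝ) (hx : 0 < x) (hφ : φ = Real.arctan x) :
    ∃ C : ℝ, 0 < C ∧ ∀ a : ℝ, 0 < a → a ≤ 1 →
      |(∑' n : ℕ, Real.exp (-a * ((n : ℝ) + 1) ^ 2) * Real.cos (a * ((n : ℝ) + 1) ^ 2 * x)) -
          (1 / 2) * Real.sqrt (π / a) * Real.cos (φ / 2) / (1 + x ^ 2) ^ ((1 : ℝ) / 4) +
          1 / 2| ≤
        C * a ^ (-(1 : ℝ) / 2) * Real.exp (-π ^ 2 / (a * (1 + x ^ 2))) := by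
  have hx2 : (0:ℝ) < 1 + x ^ 2 := by positivity
  set c0 : ℝ := π ^ 2 / (1 + x ^ 2) with hc0def
  have hc0 : 0 < c0 := by positivity
  have hden : 0 < 1 - Real.exp (-c0) := by
    have h : Real.exp (-c0) < 1 := Real.exp_lt_one_iff.mpr (by linarith)
    linarith
  refine ⟨Real.sqrt π / (1 - Real.exp (-c0)),
    div_pos (Real.sqrt_pos.mpr pi_pos) hden, ?_⟩
  intro a ha ha1
  have hπ : (0:ℝ) < π := pi_pos
  set z : ℂ := (a:ℂ) * (1 + (x:ℂ) * Complex.I) with hzdef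
  set τ : ℂ := z * Complex.I / (π:ℂ) with hτdef
  have hτre : τ.re = -(a*x)/π := by
    simp [hτdef, hzdef, Complex.div_re, Complex.div_im, Complex.normSq_apply]
    field_simp
  have hτim : τ.im = a/π := by
    simp [hτdef, hzdef, Complex.div_re, Complex.div_im, Complex.normSq_apply]
    field_simp
  have him : 0 < τ.im := by rw [hτim]; positivity
  set τ' : UpperHalfPlane := ⟨τ, him⟩ with hτ'def
  have hS := jacobiTheta_S_smul τ'
  rw [UpperHalfPlane.modular_S_smul, UpperHalfPlane.coe_mk] at hS
  -- hS : jacobiTheta (-↑τ')⁻¹ = (-Complex.I * ↑τ') ^ (1/2 : ℂ) * jacobiTheta ↑τ'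
  set σ : ℂ := (-τ)⁻¹ with hσdef
  have hσim : σ.im = π / (a*(1+x^2)) := by
    rw [hσdef, Complex.inv_im, Complex.neg_im, Complex.normSq_apply, Complex.neg_re,
      Complex.neg_im, hτre, hτim]
    field_simp
    ring
  have hσpos : 0 < σ.im := by rw [hσim]; positivity
  have hbound := norm_jacobiTheta_sub_one_le hσpos
  set u : ℂ := -Complex.I * τ with hudef
  have hure : u.re = a/π := by simp [hudef, hτim]
  have huim : u.im = a*x/π := by simp [hudef, hτre]; field_simp
  have hure0 : (0:ℝ) < u.re := by rw [hure]; positivity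
  have hu0 : u ≠ 0 := by
    intro h; rw [h] at hure0; simp at hure0
  have habs : ‖u‖ = a/π * Real.sqrt (1+x^2) := by
    rw [Complex.norm_def, Complex.normSq_apply, hure, huim,
      show a/π*(a/π) + a*x/π*(a*x/π) = (a/π)^2 * (1+x^2) by ring,
      Real.sqrt_mul (sq_nonneg _), Real.sqrt_sq (by positivity : (0:ℝ) ≤ a/π)]
  have habspos : 0 < ‖u‖ := by
    rw [habs]; positivity
  have harg : u.arg = Real.arctan x := by
    have ht : Real.tan u.arg = x := by
      rw [Complex.tan_arg, hure, huim]; field_simp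
    have h2 : u.arg ≤ π/2 := Complex.arg_le_pi_div_two_iff.mpr (Or.inl hure0.le)
    have h2' : u.arg ≠ π/2 := by
      intro h
      have := (Complex.arg_eq_pi_div_two_iff.mp h).1
      rw [this] at hure0; exact lt_irrefl 0 hure0
    have h3 : -(π/2) ≤ u.arg := Complex.neg_pi_div_two_le_arg_iff.mpr (Or.inl hure0.le)
    have h3' : u.arg ≠ -(π/2) := by
      intro h
      have := (Complex.arg_eq_neg_pi_div_two_iff.mp h).1
      rw [this] at hure0; exact lt_irrefl 0 hure0
    rw [← ht, Real.arctan_tan (lt_of_le_of_ne h3 (Ne.symm h3')) (lt_of_le_of_ne h2 h2')]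
  have hlog : Complex.log u
      = ((Real.log (‖u‖) : ℝ) : ℂ) + ((Real.arctan x : ℝ) : ℂ) * Complex.I := by
    rw [Complex.log, harg]
  set v : ℂ := u ^ ((1/2 : ℂ)) with hvdef
  have hv0 : v ≠ 0 := by
    rw [hvdef, Ne, Complex.cpow_eq_zero_iff, not_and_or]
    exact Or.inl hu0
  have hvinv : v⁻¹ = Complex.exp
      (((-(Real.log (‖u‖))/2 : ℝ) : ℂ) + ((-(Real.arctan x)/2 : ℝ) : ℂ) * Complex.I) := by
    rw [hvdef, Complex.cpow_def_of_ne_zero hu0, ← Complex.exp_neg, hlog]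
    congr 1
    push_cast
    ring
  have hexp_rpow : Real.exp (-(Real.log (‖u‖))/2)
      = (‖u‖) ^ (-(1/2) : ℝ) := by
    rw [Real.rpow_def_of_pos habspos]
    congr 1
    ring
  have hre_vinv : (v⁻¹).re
      = (‖u‖) ^ (-(1/2) : ℝ) * Real.cos (Real.arctan x / 2) := by
    rw [hvinv, Complex.exp_re]
    simp only [Complex.add_re, Complex.ofReal_re, Complex.mul_re, Complex.I_re,
      Complex.ofReal_im, Complex.I_im, Complex.add_im, Complex.mul_im]
    rw [← hexp_rpow]
    norm_num
    rw [show -(Real.arctan x) / 2 = -(Real.arctan x / 2) by ring, Real.cos_neg]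
  have hnorm_vinv : ‖v⁻¹‖ = (‖u‖) ^ (-(1/2) : ℝ) := by
    rw [hvinv, Complex.norm_exp]
    simp only [Complex.add_re, Complex.ofReal_re, Complex.mul_re, Complex.I_re,
      Complex.ofReal_im, Complex.I_im]
    rw [← hexp_rpow]
    norm_num
  -- key rpow identity
  have h2 : (a/π) ^ (-(1/2) : ℝ) = Real.sqrt (π/a) := by
    rw [Real.sqrt_eq_rpow, Real.rpow_neg (by positivity : (0:ℝ) ≤ a/π),
      show π/a = (a/π)⁻¹ by rw [inv_div], Real.inv_rpow (by positivity : (0:ℝ) ≤ a/π)]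
  have h3 : (Real.sqrt (1+x^2)) ^ (-(1/2) : ℝ) = ((1+x^2) ^ ((1:ℝ)/4))⁻¹ := by
    rw [Real.sqrt_eq_rpow, ← Real.rpow_mul hx2.le,
      show (1:ℝ)/2 * (-(1/2)) = -((1:ℝ)/4) by norm_num,
      Real.rpow_neg hx2.le]
  have key : ((a/π) * Real.sqrt (1+x^2)) ^ (-(1/2) : ℝ)
      = Real.sqrt (π/a) / (1+x^2) ^ ((1:ℝ)/4) := by
    rw [Real.mul_rpow (by positivity : (0:ℝ) ≤ a/π) (Real.sqrt_nonneg _), h2, h3]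
    ring
  -- the series identity
  have hπC : ((π:ℝ):ℂ) ≠ 0 := Complex.ofReal_ne_zero.mpr pi_ne_zero
  have hτkey : (π:ℂ) * Complex.I * τ = -z := by
    rw [hτdef,
      show (π:ℂ) * Complex.I * (z * Complex.I / (π:ℂ))
        = z * (Complex.I*Complex.I) * ((π:ℂ)/(π:ℂ)) by ring,
      Complex.I_mul_I, div_self hπC]
    ring
  have hterm : ∀ n : ℕ, (Complex.exp ((π:ℂ) * Complex.I * ((n:ℂ)+1)^2 * τ)).re
      = Real.exp (-a*((n:ℝ)+1)^2) * Real.cos (a*((n:ℝ)+1)^2*x) := by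
    intro n
    have harg2 : (π:ℂ) * Complex.I * ((n:ℂ)+1)^2 * τ
        = ((-a*((n:ℝ)+1)^2 : ℝ) : ℂ) + ((-(a*((n:ℝ)+1)^2*x) : ℝ) : ℂ) * Complex.I := by
      rw [show (π:ℂ) * Complex.I * ((n:ℂ)+1)^2 * τ
          = ((n:ℂ)+1)^2 * ((π:ℂ) * Complex.I * τ) by ring, hτkey, hzdef]
      push_cast
      ring
    rw [harg2, Complex.exp_re]
    simp only [Complex.add_re, Complex.ofReal_re, Complex.mul_re, Complex.I_re, Complex.ofReal_im,
      Complex.I_im, Complex.add_im, Complex.mul_im]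
    norm_num
  have htsum : (∑' n : ℕ, Real.exp (-a*((n:ℝ)+1)^2) * Real.cos (a*((n:ℝ)+1)^2*x))
      = ((jacobiTheta τ - 1)/2).re := by
    have h := (hasSum_nat_jacobiTheta him).mapL Complex.reCLM
    simp only [Complex.reCLM_apply] at h
    rw [← h.tsum_eq]
    exact tsum_congr fun n => (hterm n).symm
  -- functional equation
  have hθτ : jacobiTheta τ = v⁻¹ * jacobiTheta σ := by
    have hS' : jacobiTheta σ = v * jacobiTheta τ := hS
    rw [hS', ← mul_assoc, inv_mul_cancel₀ hv0, one_mul]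
  have hdecomp : ((jacobiTheta τ - 1)/2).re
      = (v⁻¹).re/2 - 1/2 + (v⁻¹ * (jacobiTheta σ - 1)).re / 2 := by
    rw [hθτ, show v⁻¹ * jacobiTheta σ - 1 = (v⁻¹ - 1) + v⁻¹ * (jacobiTheta σ - 1) by ring]
    simp [Complex.div_re, Complex.normSq_apply]
    ring
  have hmain : (v⁻¹).re/2
      = 1/2 * Real.sqrt (π/a) * Real.cos (φ/2) / (1+x^2) ^ ((1:ℝ)/4) := by
    rw [hre_vinv, habs, key, hφ]
    ring
  -- exponent bookkeeping
  set c : ℝ := π * σ.im with hcdef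
  have hcc : c = π^2/(a*(1+x^2)) := by rw [hcdef, hσim]; ring
  have hc0c : c0 ≤ c := by
    rw [hcc, hc0def]
    gcongr
    nlinarith [hx2, ha1]
  have hdenc : 1 - Real.exp (-c0) ≤ 1 - Real.exp (-c) := by
    have : Real.exp (-c) ≤ Real.exp (-c0) := Real.exp_le_exp.mpr (by linarith)
    linarith
  -- bound on |v⁻¹|
  have habsle : (‖u‖) ^ (-(1/2) : ℝ) ≤ Real.sqrt π * a ^ (-(1:ℝ)/2) := by
    have hs : 1 ≤ Real.sqrt (1+x^2) := by
      nlinarith [Real.sq_sqrt (show (0:ℝ) ≤ 1+x^2 by positivity),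
        Real.sqrt_nonneg (1+x^2), hx2]
    have h1 : a/π ≤ ‖u‖ := by
      rw [habs]
      exact le_mul_of_one_le_right (by positivity) hs
    have h2' := Real.rpow_le_rpow_of_nonpos (by positivity : (0:ℝ) < a/π) h1
      (by norm_num : (-(1/2):ℝ) ≤ 0)
    rw [h2] at h2'
    refine h2'.trans_eq ?_
    rw [Real.sqrt_div pi_pos.le, show (-(1:ℝ)/2) = -((1:ℝ)/2) by norm_num,
      Real.rpow_neg ha.le, ← Real.sqrt_eq_rpow, div_eq_mul_inv]
  -- finish
  rw [htsum, hdecomp, ← hmain,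
    show (v⁻¹).re/2 - 1/2 + (v⁻¹ * (jacobiTheta σ - 1)).re / 2 - (v⁻¹).re/2 + 1/2
      = (v⁻¹ * (jacobiTheta σ - 1)).re / 2 by ring]
  have hexpeq : Real.exp (-π^2/(a*(1+x^2))) = Real.exp (-c) := by rw [hcc, neg_div]
  rw [hexpeq]
  calc |(v⁻¹ * (jacobiTheta σ - 1)).re / 2|
      = |(v⁻¹ * (jacobiTheta σ - 1)).re| / 2 := by rw [abs_div]; norm_num
    _ ≤ ‖v⁻¹ * (jacobiTheta σ - 1)‖ / 2 := by
        gcongr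
        exact Complex.abs_re_le_norm _
    _ = ‖v⁻¹‖ * ‖jacobiTheta σ - 1‖ / 2 := by rw [norm_mul]
    _ ≤ ((Real.sqrt π * a ^ (-(1:ℝ)/2)) * (2 / (1 - Real.exp (-c0)) * Real.exp (-c))) / 2 := by
        gcongr
        · rw [hnorm_vinv]; exact habsle
        · calc ‖jacobiTheta σ - 1‖ ≤ 2 / (1 - Real.exp (-π * σ.im)) * Real.exp (-π * σ.im) :=
              hbound
            _ = 2 / (1 - Real.exp (-c)) * Real.exp (-c) := by rw [hcdef, neg_mul]
            _ ≤ 2 / (1 - Real.exp (-c0)) * Real.exp (-c) := by gcongr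
    _ = Real.sqrt π / (1 - Real.exp (-c0)) * a ^ (-(1:ℝ)/2) * Real.exp (-c) := by ring
end
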